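/- Every singleton {d} with d ∈ ℕ is realizable as the set of distances of a finitely generated Krull monoid; more strongly, the monoid can be taken to be a monoid of zero-sum sequences over a two-element subset of a finite cyclic group. -/

import Mathlib

/-- Set of lengths of factorizations of `a` into irreducible elements (atoms). -/
def LengthsOf {M : Type*} [CommMonoid M] (a : M) : Set ℕ :=
  {n | ∃ s : Multiset M, Multiset.card s = n ∧ (∀ x ∈ s, Irreducible x) ∧ s.prod = a}

/-- The set of distances (delta set) of a monoid. -/
def DeltaSet (M : Type*) [CommMonoid M] : Set ℕ :=
  {d | 0 < d ∧ ∃ (a : M) (k : ℕ), k ∈ LengthsOf a ∧ k + d ∈ LengthsOf a ∧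
      ∀ ℓ ∈ LengthsOf a, ¬(k < ℓ ∧ ℓ < k + d)}

/-- A monoid is atomic if every nonunit is a finite product of irreducible elements. -/
def IsAtomicMonoid (M : Type*) [CommMonoid M] : Prop :=
  ∀ a : M, ¬ IsUnit a → ∃ s : Multiset M, (∀ x ∈ s, Irreducible x) ∧ s.prod = a

universe u

/-- A monoid is Krull if it admits a divisor homomorphism into a free abelian monoid. -/
def IsKrullMonoid (M : Type u) [CommMonoid M] : Prop :=
  ∃ (P : Type u) (φ : M →* Multiplicative (P →₀ ℕ)), ∀ a b : M, a ∣ b ↔ φ a ∣ φ b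

/-- The monoid of zero-sum sequences over `G₀ ⊆ G`, as a submonoid of the
free abelian monoid (written multiplicatively) of multisets over `G`. -/
def ZeroSumMonoid {G : Type*} [AddCommGroup G] (G₀ : Set G) :
    Submonoid (Multiplicative (Multiset G)) where
  carrier := {S | (∀ x ∈ Multiplicative.toAdd S, x ∈ G₀) ∧ (Multiplicative.toAdd S).sum = 0}
  one_mem' := by simp
  mul_mem' := by
    intro a b ha hb
    refine ⟨?_, ?_⟩
    · intro x hx
      rw [toAdd_mul, Multiset.mem_add] at hx
      exact hx.elim (ha.1 x) (hb.1 x)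
    · rw [toAdd_mul, Multiset.sum_add, ha.2, hb.2, add_zero]

/-! ### Auxiliary development -/

namespace ZSAux

variable (d : ℕ)

abbrev Md := ↥(ZeroSumMonoid ({1, -1} : Set (ZMod (d + 2))))

/-- the multiset with `a` copies of `1` and `b` copies of `-1` -/
def mk2 (a b : ℕ) : Multiset (ZMod (d + 2)) :=
  Multiset.replicate a 1 + Multiset.replicate b (-1)

variable {d}

lemma one_ne_neg_one (hd : 0 < d) : (1 : ZMod (d + 2)) ≠ -1 := by
  intro h
  have h2 : ((2 : ℕ) : ZMod (d + 2)) = 0 := by push_cast; linear_combination h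
  rw [ZMod.natCast_eq_zero_iff] at h2
  exact absurd (Nat.le_of_dvd (by norm_num) h2) (by omega)

lemma mk2_count_one (hd : 0 < d) (a b : ℕ) : (mk2 d a b).count 1 = a := by
  simp [mk2, Multiset.count_replicate, (one_ne_neg_one hd).symm]

lemma mk2_count_neg (hd : 0 < d) (a b : ℕ) : (mk2 d a b).count (-1) = b := by
  simp [mk2, Multiset.count_replicate, one_ne_neg_one hd]

lemma mk2_sum (a b : ℕ) : (mk2 d a b).sum = (a : ZMod (d + 2)) - b := by
  simp [mk2, Multiset.sum_replicate, sub_eq_add_neg]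

lemma mk2_forall (a b : ℕ) : ∀ x ∈ mk2 d a b, x ∈ ({1, -1} : Set (ZMod (d + 2))) := by
  intro x hx
  rcases Multiset.mem_add.1 hx with h | h <;>
    simp [Multiset.eq_of_mem_replicate h]

lemma mk2_add (a b a' b' : ℕ) : mk2 d a b + mk2 d a' b' = mk2 d (a + a') (b + b') := by
  simp [mk2, Multiset.replicate_add]; abel

lemma mk2_smul (k a b : ℕ) : k • mk2 d a b = mk2 d (k * a) (k * b) := by
  simp [mk2, Multiset.nsmul_replicate]

lemma mk2_inj (hd : 0 < d) {a b a' b' : ℕ} (h : mk2 d a b = mk2 d a' b') :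
    a = a' ∧ b = b' := by
  constructor
  · rw [← mk2_count_one hd a b, h, mk2_count_one hd]
  · rw [← mk2_count_neg hd a b, h, mk2_count_neg hd]

lemma eq_mk2 (hd : 0 < d) {S : Multiset (ZMod (d + 2))}
    (h : ∀ x ∈ S, x ∈ ({1, -1} : Set (ZMod (d + 2)))) :
    S = mk2 d (S.count 1) (S.count (-1)) := by
  ext y
  by_cases h1 : y = 1
  · subst h1; rw [mk2_count_one hd]
  · by_cases h2 : y = -1
    · subst h2; rw [mk2_count_neg hd]
    · rw [Multiset.count_eq_zero_of_notMem, Multiset.count_eq_zero_of_notMem]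
      · intro hy; rcases mk2_forall _ _ y hy with h | h <;> simp_all
      · intro hy; rcases h y hy with h' | h' <;> simp_all

lemma mk2_sum_zero_iff (a b : ℕ) :
    (mk2 d a b).sum = 0 ↔ a ≡ b [MOD d + 2] := by
  rw [mk2_sum, sub_eq_zero, ZMod.natCast_eq_natCast_iff]

lemma mem_zsm_iff {S : Multiplicative (Multiset (ZMod (d + 2)))} :
    S ∈ ZeroSumMonoid ({1, -1} : Set (ZMod (d + 2))) ↔
      (∀ x ∈ Multiplicative.toAdd S, x ∈ ({1, -1} : Set (ZMod (d + 2)))) ∧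
        (Multiplicative.toAdd S).sum = 0 := Iff.rfl

variable (d) in
/-- the element of the zero-sum monoid with `a` ones and `b` minus-ones -/
def el (a b : ℕ) (h : a ≡ b [MOD d + 2]) : Md d :=
  ⟨Multiplicative.ofAdd (mk2 d a b), mk2_forall a b, (mk2_sum_zero_iff a b).2 h⟩

lemma el_congr {a b a' b' : ℕ} {h h'} (ha : a = a') (hb : b = b') :
    el d a b h = el d a' b' h' := by subst ha; subst hb; rfl

lemma el_inj (hd : 0 < d) {a b a' b' : ℕ} {h h'}
    (heq : el d a b h = el d a' b' h') : a = a' ∧ b = b' := by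
  apply mk2_inj hd
  have := congrArg (fun x : Md d => Multiplicative.toAdd x.val) heq
  simpa [el] using this

lemma el_mul (a b a' b' : ℕ) (h h') :
    el d a b h * el d a' b' h' = el d (a + a') (b + b') (Nat.ModEq.add h h') := by
  apply Subtype.ext
  show Multiplicative.ofAdd (mk2 d a b) * Multiplicative.ofAdd (mk2 d a' b') = _
  rw [← ofAdd_add, mk2_add]
  rfl

lemma el_pow (a b k : ℕ) (h) :
    (el d a b h) ^ k = el d (k * a) (k * b) (Nat.ModEq.mul_left k h) := by
  apply Subtype.ext
  show (Multiplicative.ofAdd (mk2 d a b)) ^ k = _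
  have : (Multiplicative.ofAdd (mk2 d a b)) ^ k
      = Multiplicative.ofAdd (k • mk2 d a b) := by
    simp
  rw [this, mk2_smul]
  rfl

lemma el_zero : el d 0 0 (Nat.ModEq.refl 0) = 1 := by
  apply Subtype.ext
  show Multiplicative.ofAdd (mk2 d 0 0) = 1
  simp [mk2]

lemma exists_el (hd : 0 < d) (x : Md d) : ∃ a b h, x = el d a b h := by
  obtain ⟨S, hS1, hS2⟩ := x
  have hrep := eq_mk2 hd (S := Multiplicative.toAdd S) hS1
  have hmod : (Multiplicative.toAdd S).count 1 ≡ (Multiplicative.toAdd S).count (-1) [MOD d+2] := by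
    rw [← mk2_sum_zero_iff, ← hrep]; exact hS2
  refine ⟨_, _, hmod, ?_⟩
  apply Subtype.ext
  show S = Multiplicative.ofAdd (mk2 d _ _)
  rw [← hrep]
  rfl

lemma isUnit_iff_eq_one (x : Md d) : IsUnit x ↔ x = 1 := by
  refine ⟨?_, by rintro rfl; exact isUnit_one⟩
  rintro ⟨u, rfl⟩
  have h1 : ((u : Md d) : Multiplicative (Multiset (ZMod (d+2)))) *
      ((↑u⁻¹ : Md d) : Multiplicative (Multiset (ZMod (d+2)))) = 1 := by
    rw [← Submonoid.coe_mul, u.mul_inv, OneMemClass.coe_one]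
  have h2 := congrArg (fun S => Multiset.card (Multiplicative.toAdd S)) h1
  simp only [toAdd_mul, Multiset.card_add, toAdd_one, Multiset.card_zero] at h2
  have h3 : Multiplicative.toAdd ((u : Md d) : Multiplicative (Multiset (ZMod (d+2)))) = 0 :=
    Multiset.card_eq_zero.1 (by omega)
  apply Subtype.ext
  show ((u : Md d) : Multiplicative (Multiset (ZMod (d+2)))) = 1
  rw [← ofAdd_toAdd ((u : Md d) : Multiplicative (Multiset (ZMod (d+2)))), h3]
  rfl

lemma isUnit_el_iff (hd : 0 < d) {a b : ℕ} {h} :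
    IsUnit (el d a b h) ↔ a = 0 ∧ b = 0 := by
  rw [isUnit_iff_eq_one, ← el_zero]
  exact ⟨el_inj hd, by rintro ⟨rfl, rfl⟩; rfl⟩

lemma modeq_small {a b : ℕ} (ha : a < d + 2) (hb : b < d + 2)
    (h : a ≡ b [MOD d + 2]) : a = b := by
  have := h
  unfold Nat.ModEq at this
  rwa [Nat.mod_eq_of_lt ha, Nat.mod_eq_of_lt hb] at this

lemma modeq_aux (x y z : ℕ) : (d+2)*x + z ≡ (d+2)*y + z [MOD d + 2] :=
  Nat.ModEq.add_right z
    ((Nat.modEq_zero_iff_dvd.2 (dvd_mul_right _ _)).trans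
      (Nat.modEq_zero_iff_dvd.2 (dvd_mul_right _ _)).symm)

/-- characterization of the irreducible elements -/
lemma irr_el_iff (hd : 0 < d) {a b : ℕ} {h} :
    Irreducible (el d a b h) ↔
      (a = d + 2 ∧ b = 0) ∨ (a = 0 ∧ b = d + 2) ∨ (a = 1 ∧ b = 1) := by
  have hn0 : (d + 2) ≡ 0 [MOD d + 2] := (Nat.modEq_zero_iff_dvd).2 dvd_rfl
  constructor
  · intro hirr
    have hnu : ¬ (a = 0 ∧ b = 0) := fun ⟨ha, hb⟩ => hirr.not_isUnit
      ((isUnit_el_iff hd).2 ⟨ha, hb⟩)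
    by_cases ha1 : 1 ≤ a
    · by_cases hb1 : 1 ≤ b
      · -- split off el 1 1
        obtain ⟨a0, rfl⟩ : ∃ a0, a = a0 + 1 := ⟨a - 1, by omega⟩
        obtain ⟨b0, rfl⟩ : ∃ b0, b = b0 + 1 := ⟨b - 1, by omega⟩
        have h0 : a0 ≡ b0 [MOD d + 2] := Nat.ModEq.add_right_cancel' 1 h
        have hdec : el d (a0+1) (b0+1) h = el d a0 b0 h0 * el d 1 1 (Nat.ModEq.refl 1) := by
          rw [el_mul]
        rcases hirr.isUnit_or_isUnit hdec with hu | hu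
        · rw [isUnit_el_iff hd] at hu
          exact Or.inr (Or.inr (by omega))
        · rw [isUnit_el_iff hd] at hu
          omega
      · -- b = 0, a is a positive multiple of d+2
        have hb0 : b = 0 := by omega
        subst hb0
        have hdvd : (d + 2) ∣ a := (Nat.modEq_zero_iff_dvd).1 h
        have hge : d + 2 ≤ a := Nat.le_of_dvd (by omega) hdvd
        obtain ⟨a0, rfl⟩ : ∃ a0, a = a0 + (d + 2) := ⟨a - (d+2), by omega⟩
        have h0 : a0 ≡ 0 [MOD d + 2] := (Nat.modEq_zero_iff_dvd).2
          (by simpa using Nat.dvd_sub hdvd (dvd_refl (d+2)))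
        have hdec : el d (a0 + (d+2)) 0 h = el d a0 0 h0 * el d (d+2) 0 hn0 := by
          rw [el_mul]
        rcases hirr.isUnit_or_isUnit hdec with hu | hu
        · rw [isUnit_el_iff hd] at hu
          exact Or.inl (by omega)
        · rw [isUnit_el_iff hd] at hu
          omega
    · -- a = 0, b is a positive multiple of d+2
      have ha0 : a = 0 := by omega
      subst ha0
      have hdvd : (d + 2) ∣ b := (Nat.modEq_zero_iff_dvd).1 h.symm
      have hge : d + 2 ≤ b := Nat.le_of_dvd (by omega) hdvd
      obtain ⟨b0, rfl⟩ : ∃ b0, b = b0 + (d + 2) := ⟨b - (d+2), by omega⟩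
      have h0 : (0:ℕ) ≡ b0 [MOD d + 2] := ((Nat.modEq_zero_iff_dvd).2
        (by simpa using Nat.dvd_sub hdvd (dvd_refl (d+2)))).symm
      have hdec : el d 0 (b0 + (d+2)) h = el d 0 b0 h0 * el d 0 (d+2) hn0.symm := by
        rw [el_mul]
      rcases hirr.isUnit_or_isUnit hdec with hu | hu
      · rw [isUnit_el_iff hd] at hu
        exact Or.inr (Or.inl (by omega))
      · rw [isUnit_el_iff hd] at hu
        omega
  · intro hcase
    constructor
    · rw [isUnit_el_iff hd]
      omega
    · intro u v huv
      obtain ⟨au, bu, hu, rfl⟩ := exists_el hd u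
      obtain ⟨av, bv, hv, rfl⟩ := exists_el hd v
      rw [el_mul] at huv
      obtain ⟨hA, hB⟩ := el_inj hd huv.symm
      rw [isUnit_el_iff hd, isUnit_el_iff hd]
      rcases hcase with ⟨rfl, rfl⟩ | ⟨rfl, rfl⟩ | ⟨rfl, rfl⟩
      · -- a = d+2, b = 0 : au + av = d+2, bu = bv = 0
        have hbu : bu = 0 := by omega
        have hdvd : (d+2) ∣ au := (Nat.modEq_zero_iff_dvd).1 (hbu ▸ hu)
        rcases Nat.eq_zero_or_pos au with h0 | h0
        · exact Or.inl (by omega)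
        · have := Nat.le_of_dvd h0 hdvd
          exact Or.inr (by omega)
      · -- a = 0, b = d+2
        have hau : au = 0 := by omega
        have hdvd : (d+2) ∣ bu := (Nat.modEq_zero_iff_dvd).1 (hau ▸ hu).symm
        rcases Nat.eq_zero_or_pos bu with h0 | h0
        · exact Or.inl (by omega)
        · have := Nat.le_of_dvd h0 hdvd
          exact Or.inr (by omega)
      · -- a = b = 1
        have : au = bu := modeq_small (by omega) (by omega) hu
        omega


lemma prod_of_irreducibles (hd : 0 < d) (s : Multiset (Md d))
    (hs : ∀ x ∈ s, Irreducible x) :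
    ∃ x y z : ℕ, Multiset.card s = x + y + z ∧
      s.prod = el d ((d+2)*x + z) ((d+2)*y + z) (modeq_aux x y z) := by
  induction s using Multiset.induction_on with
  | empty =>
      refine ⟨0, 0, 0, by simp, ?_⟩
      simp only [Multiset.prod_zero]
      rw [← el_zero]
      exact el_congr (by ring) (by ring)
  | cons a t ih =>
      obtain ⟨x, y, z, hcard, hprod⟩ := ih (fun x hx => hs x (Multiset.mem_cons_of_mem hx))
      have ha := hs a (Multiset.mem_cons_self a t)
      obtain ⟨aa, ba, hma, rfl⟩ := exists_el hd a
      rcases (irr_el_iff hd).1 ha with ⟨rfl, rfl⟩ | ⟨rfl, rfl⟩ | ⟨rfl, rfl⟩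
      · refine ⟨x + 1, y, z, by simp [hcard]; ring, ?_⟩
        rw [Multiset.prod_cons, hprod, el_mul]
        exact el_congr (by ring) (by ring)
      · refine ⟨x, y + 1, z, by simp [hcard]; ring, ?_⟩
        rw [Multiset.prod_cons, hprod, el_mul]
        exact el_congr (by ring) (by ring)
      · refine ⟨x, y, z + 1, by simp [hcard]; ring, ?_⟩
        rw [Multiset.prod_cons, hprod, el_mul]
        exact el_congr (by ring) (by ring)

lemma lengths_el (hd : 0 < d) {a b : ℕ} {h} :
    LengthsOf (el d a b h) =
      {k | ∃ x y z : ℕ, k = x + y + z ∧ (d+2)*x + z = a ∧ (d+2)*y + z = b} := by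
  have hn0 : (d + 2) ≡ 0 [MOD d + 2] := Nat.modEq_zero_iff_dvd.2 dvd_rfl
  ext k
  constructor
  · rintro ⟨s, hcard, hirr, hprod⟩
    obtain ⟨x, y, z, hc, hp⟩ := prod_of_irreducibles hd s hirr
    rw [hp] at hprod
    obtain ⟨h1, h2⟩ := el_inj hd hprod
    exact ⟨x, y, z, by omega, h1, h2⟩
  · rintro ⟨x, y, z, rfl, hxa, hyb⟩
    refine ⟨Multiset.replicate x (el d (d+2) 0 hn0) +
      Multiset.replicate y (el d 0 (d+2) hn0.symm) +
      Multiset.replicate z (el d 1 1 (Nat.ModEq.refl 1)), by simp, ?_, ?_⟩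
    · intro w hw
      simp only [Multiset.mem_add] at hw
      rcases hw with (hw | hw) | hw <;>
        rw [Multiset.eq_of_mem_replicate hw, irr_el_iff hd] <;> tauto
    · rw [Multiset.prod_add, Multiset.prod_add, Multiset.prod_replicate,
        Multiset.prod_replicate, Multiset.prod_replicate, el_pow, el_pow, el_pow,
        el_mul, el_mul]
      exact el_congr (by rw [← hxa]; ring) (by rw [← hyb]; ring)

/-- key step: lengths are an arithmetic progression with difference `d` -/
lemma lengths_step (hd : 0 < d) (e : Md d) {k k' : ℕ}
    (hk : k ∈ LengthsOf e) (hk' : k' ∈ LengthsOf e) (hlt : k < k') :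
    k + d ∈ LengthsOf e ∧ k + d ≤ k' := by
  obtain ⟨a, b, h, rfl⟩ := exists_el hd e
  rw [lengths_el hd] at hk hk' ⊢
  obtain ⟨x, y, z, rfl, hxa, hyb⟩ := hk
  obtain ⟨x', y', z', rfl, hxa', hyb'⟩ := hk'
  -- pass to integers
  have e1n : (d+2)*x + z = (d+2)*x' + z' := hxa.trans hxa'.symm
  have e2n : (d+2)*y + z = (d+2)*y' + z' := hyb.trans hyb'.symm
  have e1 : ((d:ℤ)+2)*x + z = ((d:ℤ)+2)*x' + z' := by exact_mod_cast e1n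
  have e2 : ((d:ℤ)+2)*y + z = ((d:ℤ)+2)*y' + z' := by exact_mod_cast e2n
  set t : ℤ := (x : ℤ) - x' with ht
  have e3 : (z':ℤ) - z = ((d:ℤ)+2) * t := by rw [ht]; linarith
  have e4 : (y:ℤ) - y' = t := by
    have : ((d:ℤ)+2) * ((y:ℤ) - y') = ((d:ℤ)+2) * t := by linarith
    exact mul_left_cancel₀ (by positivity) this
  have hklt : (x:ℤ) + y + z < x' + y' + z' := by exact_mod_cast hlt
  have ht1 : 1 ≤ t := by nlinarith
  have hx1 : 1 ≤ x := by
    have : 1 ≤ (x:ℤ) := by omega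
    exact_mod_cast this
  have hy1 : 1 ≤ y := by
    have : 1 ≤ (y:ℤ) := by omega
    exact_mod_cast this
  have hle : (x:ℤ) + y + z + d ≤ x' + y' + z' := by nlinarith
  constructor
  · refine ⟨x - 1, y - 1, z + (d + 2), by omega, ?_, ?_⟩
    · obtain ⟨x0, rfl⟩ : ∃ x0, x = x0 + 1 := ⟨x - 1, by omega⟩
      rw [← hxa]; simp only [Nat.add_sub_cancel]; ring
    · obtain ⟨y0, rfl⟩ : ∃ y0, y = y0 + 1 := ⟨y - 1, by omega⟩
      rw [← hyb]; simp only [Nat.add_sub_cancel]; ring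
  · exact_mod_cast hle


open Multiplicative in
variable (d) in
/-- the divisor homomorphism into the free abelian monoid `ZMod (d+2) →₀ ℕ` -/
noncomputable def phi : Md d →* Multiplicative (ZMod (d + 2) →₀ ℕ) where
  toFun x := ofAdd (Multiset.toFinsupp (toAdd (x : Multiplicative (Multiset (ZMod (d+2))))))
  map_one' := by simp
  map_mul' x y := by
    simp only [Submonoid.coe_mul, toAdd_mul, map_add, ofAdd_add]

open Multiplicative in
lemma krull : IsKrullMonoid (Md d) := by
  classical
  refine ⟨ZMod (d + 2), phi d, fun a b => ⟨fun hab => map_dvd _ hab, ?_⟩⟩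
  rintro ⟨c, hc⟩
  have hc' : Multiset.toFinsupp (toAdd (b : Multiplicative (Multiset (ZMod (d+2)))))
      = Multiset.toFinsupp (toAdd (a : Multiplicative (Multiset (ZMod (d+2))))) + toAdd c := by
    simpa [phi] using congrArg toAdd hc
  set c' : Multiset (ZMod (d+2)) := Multiset.toFinsupp.symm (toAdd c) with hc'def
  have key : toAdd (b : Multiplicative (Multiset (ZMod (d+2))))
      = toAdd (a : Multiplicative (Multiset (ZMod (d+2)))) + c' := by
    apply Multiset.toFinsupp.injective
    simp [hc', hc'def]
  have hle : c' ≤ toAdd (b : Multiplicative (Multiset (ZMod (d+2)))) := by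
    rw [key]; exact Multiset.le_add_left _ _
  have hmem : ofAdd c' ∈ ZeroSumMonoid ({1, -1} : Set (ZMod (d+2))) := by
    rw [mem_zsm_iff]
    constructor
    · intro x hx
      exact (mem_zsm_iff.1 b.2).1 x (Multiset.mem_of_le hle (by simpa using hx))
    · have hs := congrArg Multiset.sum key
      rw [Multiset.sum_add, (mem_zsm_iff.1 b.2).2, (mem_zsm_iff.1 a.2).2, zero_add] at hs
      simpa using hs.symm
  refine ⟨⟨ofAdd c', hmem⟩, ?_⟩
  apply Subtype.ext
  show (b : Multiplicative (Multiset (ZMod (d+2)))) = _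
  rw [Submonoid.coe_mul]
  show _ = (a : Multiplicative (Multiset (ZMod (d+2)))) * ofAdd c'
  rw [← ofAdd_toAdd (a : Multiplicative (Multiset (ZMod (d+2)))), ← ofAdd_add,
    ← key, ofAdd_toAdd]

lemma fg (hd : 0 < d) :
    ∃ S : Finset (Md d), Submonoid.closure (S : Set (Md d)) = ⊤ := by
  classical
  have hn0 : (d + 2) ≡ 0 [MOD d + 2] := Nat.modEq_zero_iff_dvd.2 dvd_rfl
  refine ⟨{el d (d+2) 0 hn0, el d 0 (d+2) hn0.symm, el d 1 1 (Nat.ModEq.refl 1)}, ?_⟩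
  rw [eq_top_iff]
  intro m _
  set K := Submonoid.closure
    (({el d (d+2) 0 hn0, el d 0 (d+2) hn0.symm, el d 1 1 (Nat.ModEq.refl 1)} : Finset (Md d)) : Set (Md d))
  have hA : el d (d+2) 0 hn0 ∈ K := Submonoid.subset_closure (by simp)
  have hB : el d 0 (d+2) hn0.symm ∈ K := Submonoid.subset_closure (by simp)
  have hC : el d 1 1 (Nat.ModEq.refl 1) ∈ K := Submonoid.subset_closure (by simp)
  obtain ⟨a, b, h, rfl⟩ := exists_el hd m
  rcases le_total a b with hab | hab
  · obtain ⟨t, ht⟩ := (Nat.modEq_iff_dvd' hab).1 h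
    have hb : b = (d+2) * t + a := ((Nat.sub_eq_iff_eq_add hab).1 ht)
    have hrw : el d a b h = el d 1 1 (Nat.ModEq.refl 1) ^ a * el d 0 (d+2) hn0.symm ^ t := by
      rw [el_pow, el_pow, el_mul]
      exact el_congr (by ring) (by rw [hb]; ring)
    rw [hrw]
    exact Submonoid.mul_mem _ (Submonoid.pow_mem _ hC a) (Submonoid.pow_mem _ hB t)
  · obtain ⟨t, ht⟩ := (Nat.modEq_iff_dvd' hab).1 h.symm
    have ha : a = (d+2) * t + b := ((Nat.sub_eq_iff_eq_add hab).1 ht)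
    have hrw : el d a b h = el d 1 1 (Nat.ModEq.refl 1) ^ b * el d (d+2) 0 hn0 ^ t := by
      rw [el_pow, el_pow, el_mul]
      exact el_congr (by rw [ha]; ring) (by ring)
    rw [hrw]
    exact Submonoid.mul_mem _ (Submonoid.pow_mem _ hC b) (Submonoid.pow_mem _ hA t)

lemma lengths_E (hd : 0 < d) :
    LengthsOf (el d (d+2) (d+2) (Nat.ModEq.refl _)) = {2, d+2} := by
  rw [lengths_el hd]
  ext k
  simp only [Set.mem_setOf_eq, Set.mem_insert_iff, Set.mem_singleton_iff]
  constructor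
  · rintro ⟨x, y, z, rfl, h1, h2⟩
    rcases Nat.eq_zero_or_pos x with hx | hx
    · subst hx
      have hz : z = d + 2 := by simpa using h1
      subst hz
      have hy : (d+2) * y = 0 := by omega
      have : y = 0 := by
        rcases Nat.mul_eq_zero.1 hy with h | h
        · omega
        · exact h
      subst this
      right; omega
    · obtain ⟨x0, rfl⟩ : ∃ x0, x = x0 + 1 := ⟨x - 1, by omega⟩
      have h1' : (d+2) * x0 + z = 0 := by
        have : (d+2) * (x0 + 1) = (d+2) * x0 + (d+2) := by ring
        omega
      have hx0 : x0 = 0 := by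
        rcases Nat.mul_eq_zero.1 (by omega : (d+2) * x0 = 0) with h | h
        · omega
        · exact h
      have hz : z = 0 := by omega
      subst hx0; subst hz
      have hy : (d+2) * y = (d+2) * 1 := by omega
      have : y = 1 := Nat.eq_of_mul_eq_mul_left (by omega) hy
      subst this
      left; rfl
  · rintro (rfl | rfl)
    · exact ⟨1, 1, 0, rfl, by ring, by ring⟩
    · exact ⟨0, 0, d+2, by ring_nf, by ring, by ring⟩

lemma deltaSet_eq (hd : 0 < d) : DeltaSet (Md d) = {d} := by
  ext d'
  simp only [Set.mem_singleton_iff]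
  constructor
  · rintro ⟨hd', a, k, hk, hkd, hgap⟩
    obtain ⟨hmem, hle⟩ := lengths_step hd a hk hkd (by omega)
    have := hgap _ hmem
    omega
  · intro h
    subst h
    refine ⟨hd, el d' (d'+2) (d'+2) (Nat.ModEq.refl _), 2, ?_, ?_, ?_⟩
    · rw [lengths_E hd]; left; rfl
    · rw [lengths_E hd]; right; show (2:ℕ) + d' = d' + 2; omega
    · intro ℓ hℓ
      rw [lengths_E hd] at hℓ
      rcases hℓ with rfl | rfl <;> omega

end ZSAux

/-- Every singleton `{d}` is the set of distances of a finitely generated Krull monoid,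
namely the monoid of zero-sum sequences over `{1, -1} ⊆ ℤ/(d+2)ℤ`. -/
theorem singleton_deltaSet_realizable (d : ℕ) (hd : 0 < d) :
    IsKrullMonoid ↥(ZeroSumMonoid ({1, -1} : Set (ZMod (d + 2)))) ∧
    (∃ S : Finset ↥(ZeroSumMonoid ({1, -1} : Set (ZMod (d + 2)))),
      Submonoid.closure (S : Set ↥(ZeroSumMonoid ({1, -1} : Set (ZMod (d + 2))))) = ⊤) ∧
    DeltaSet ↥(ZeroSumMonoid ({1, -1} : Set (ZMod (d + 2)))) = {d} := by
  exact ⟨ZSAux.krull, ZSAux.fg hd, ZSAux.deltaSet_eq hd⟩
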